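/- arXiv:1303.0529 — 4 statements merged into one kernel-verified Lean document; each statement's English description precedes it below -/
import Mathlib

section
/- Let X and Y be nonnegative random variables defined on the same probability space. Then E[ln(1 + X/(1 + Y))] = ∫₀^∞ (exp(-z)/z)·(E[exp(-z·Y)] − E[exp(-z·(X+Y))]) dz, where both sides are interpreted as values in [0, ∞] (the integrand on the right-hand side is nonnegative for every z > 0). -/
open MeasureTheory Real Set

lemma lint_exp_neg_mul {t : ℝ} (ht : 0 < t) :
    ∫⁻ z in Ioi (0 : ℝ), ENNReal.ofReal (Real.exp (-(t * z))) = ENNReal.ofReal (1 / t) := by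
  have hint : IntegrableOn (fun z : ℝ => Real.exp (-(t * z))) (Ioi 0) := by
    simpa [neg_mul] using exp_neg_integrableOn_Ioi 0 ht
  rw [← ofReal_integral_eq_lintegral_ofReal hint
    (Filter.Eventually.of_forall fun z => (Real.exp_pos _).le)]
  congr 1
  have := integral_comp_mul_left_Ioi (fun x : ℝ => Real.exp (-x)) 0 ht
  simp only [mul_zero, smul_eq_mul] at this
  rw [this, integral_exp_neg_Ioi]
  simp [one_div]

lemma frullani {a b : ℝ} (ha : 0 < a) (hab : a ≤ b) :
    ∫⁻ z in Ioi (0 : ℝ),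
      ENNReal.ofReal ((Real.exp (-(a * z)) - Real.exp (-(b * z))) / z)
      = ENNReal.ofReal (Real.log (b / a)) := by
  have hb : 0 < b := ha.trans_le hab
  -- pointwise: (e^{-az} - e^{-bz})/z = ∫ t in a..b, e^{-tz}
  have key : ∀ z ∈ Ioi (0 : ℝ),
      ENNReal.ofReal ((Real.exp (-(a * z)) - Real.exp (-(b * z))) / z)
        = ∫⁻ t in Ioc a b, ENNReal.ofReal (Real.exp (-(t * z))) := by
    intro z hz
    rw [mem_Ioi] at hz
    have hderiv : ∀ t ∈ uIcc a b, HasDerivAt (fun t => -Real.exp (-(t * z)) / z)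
        (Real.exp (-(t * z))) t := by
      intro t _
      have h1 : HasDerivAt (fun t : ℝ => -(t * z)) (-z) t := by
        simpa using ((hasDerivAt_id t).mul_const z).fun_neg
      have h2 := (h1.exp).neg.div_const z
      simpa [mul_div_assoc, mul_comm, hz.ne'] using h2
    have hcont : Continuous fun t : ℝ => Real.exp (-(t * z)) := by continuity
    have hii : IntervalIntegrable (fun t => Real.exp (-(t * z))) volume a b :=
      hcont.intervalIntegrable a b
    have hftc := intervalIntegral.integral_eq_sub_of_hasDerivAt hderiv hii
    have heq : (Real.exp (-(a * z)) - Real.exp (-(b * z))) / z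
        = ∫ t in a..b, Real.exp (-(t * z)) := by
      rw [hftc]; ring
    rw [heq, intervalIntegral.integral_of_le hab,
      ← ofReal_integral_eq_lintegral_ofReal
        (hcont.integrableOn_Icc.mono_set Ioc_subset_Icc_self)
        (Filter.Eventually.of_forall fun t => (Real.exp_pos _).le)]
  rw [setLIntegral_congr_fun measurableSet_Ioi key]
  -- swap
  have hswap : ∫⁻ z in Ioi (0:ℝ), ∫⁻ t in Ioc a b, ENNReal.ofReal (Real.exp (-(t * z)))
      = ∫⁻ t in Ioc a b, ∫⁻ z in Ioi (0:ℝ), ENNReal.ofReal (Real.exp (-(t * z))) := by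
    apply lintegral_lintegral_swap
    apply Measurable.aemeasurable
    exact (measurable_snd.mul measurable_fst).neg.exp.ennreal_ofReal
  rw [hswap]
  have hinner : ∀ t ∈ Ioc a b,
      (∫⁻ z in Ioi (0:ℝ), ENNReal.ofReal (Real.exp (-(t * z)))) = ENNReal.ofReal (1 / t) :=
    fun t ht => lint_exp_neg_mul (ha.trans ht.1)
  rw [setLIntegral_congr_fun measurableSet_Ioc hinner]
  have hcont : ContinuousOn (fun t : ℝ => 1 / t) (Icc a b) := by
    apply ContinuousOn.div continuousOn_const continuousOn_id
    intro t ht; exact (ha.trans_le ht.1).ne'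
  have hint : IntegrableOn (fun t : ℝ => 1 / t) (Ioc a b) :=
    (hcont.integrableOn_Icc).mono_set Ioc_subset_Icc_self
  rw [← ofReal_integral_eq_lintegral_ofReal hint
    ((ae_restrict_iff' measurableSet_Ioc).2 (Filter.Eventually.of_forall
      fun t ht => (one_div_pos.2 (ha.trans ht.1)).le))]
  congr 1
  rw [← intervalIntegral.integral_of_le hab, integral_one_div]
  exact notMem_uIcc_of_lt ha (ha.trans_le hab)

/-- Hamdi's lemma (N = M = 1), general form: for nonnegative random variables `X`, `Y`,
`E[ln(1 + X/(1+Y))] = ∫₀^∞ (e^{-z}/z) (E[e^{-zY}] - E[e^{-z(X+Y)}]) dz`,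
both sides interpreted in `[0, ∞]`. -/
theorem average_rate_mgf_identity
    {Ω : Type*} [MeasurableSpace Ω] (μ : Measure Ω) [IsProbabilityMeasure μ]
    (X Y : Ω → ℝ) (hX : Measurable X) (hY : Measurable Y)
    (hXnn : ∀ ω, 0 ≤ X ω) (hYnn : ∀ ω, 0 ≤ Y ω) :
    ∫⁻ ω, ENNReal.ofReal (Real.log (1 + X ω / (1 + Y ω))) ∂μ
      = ∫⁻ z in Ioi (0 : ℝ),
          ENNReal.ofReal ((Real.exp (-z) / z) *
            ((∫ ω, Real.exp (-(z * Y ω)) ∂μ)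
              - (∫ ω, Real.exp (-(z * (X ω + Y ω))) ∂μ))) := by
  have hstep : ∀ z ∈ Ioi (0:ℝ),
      ENNReal.ofReal ((Real.exp (-z) / z) *
          ((∫ ω, Real.exp (-(z * Y ω)) ∂μ) - ∫ ω, Real.exp (-(z * (X ω + Y ω))) ∂μ))
      = ∫⁻ ω, ENNReal.ofReal
          ((Real.exp (-((1 + Y ω) * z)) - Real.exp (-((1 + X ω + Y ω) * z))) / z) ∂μ := by
    intro z hz
    rw [mem_Ioi] at hz
    have hbd : ∀ (g : Ω → ℝ), Measurable g → (∀ ω, 0 ≤ g ω) →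
        Integrable (fun ω => Real.exp (-(z * g ω))) μ := by
      intro g hg hgnn
      refine Integrable.mono' (integrable_const 1)
        ((hg.const_mul z).neg.exp.aestronglyMeasurable)
        (Filter.Eventually.of_forall fun ω => ?_)
      rw [Real.norm_eq_abs, abs_of_pos (Real.exp_pos _)]
      exact Real.exp_le_one_iff.2 (neg_nonpos.2 (mul_nonneg hz.le (hgnn ω)))
    have hint1 : Integrable (fun ω => Real.exp (-(z * Y ω))) μ := hbd Y hY hYnn
    have hint2 : Integrable (fun ω => Real.exp (-(z * (X ω + Y ω)))) μ :=
      hbd _ (hX.add hY) (fun ω => add_nonneg (hXnn ω) (hYnn ω))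
    rw [← integral_sub hint1 hint2, ← integral_const_mul]
    have hnn : 0 ≤ᵐ[μ] fun ω => Real.exp (-z) / z *
        (Real.exp (-(z * Y ω)) - Real.exp (-(z * (X ω + Y ω)))) := by
      refine Filter.Eventually.of_forall fun ω => mul_nonneg (by positivity) (sub_nonneg.2 ?_)
      exact Real.exp_le_exp.2 (by nlinarith [hXnn ω, hz])
    have hint3 : Integrable (fun ω => Real.exp (-z) / z *
        (Real.exp (-(z * Y ω)) - Real.exp (-(z * (X ω + Y ω))))) μ := by
      simpa using (hint1.sub hint2).const_mul (Real.exp (-z) / z)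
    rw [ofReal_integral_eq_lintegral_ofReal hint3 hnn]
    refine lintegral_congr fun ω => ?_
    congr 1
    have e1 : Real.exp (-((1 + Y ω) * z)) = Real.exp (-z) * Real.exp (-(z * Y ω)) := by
      rw [← Real.exp_add]; ring_nf
    have e2 : Real.exp (-((1 + X ω + Y ω) * z))
        = Real.exp (-z) * Real.exp (-(z * (X ω + Y ω))) := by
      rw [← Real.exp_add]; ring_nf
    rw [e1, e2]; ring
  rw [setLIntegral_congr_fun measurableSet_Ioi hstep]
  have hmeas : AEMeasurable
      (fun p : ℝ × Ω => ENNReal.ofReal ((Real.exp (-((1 + Y p.2) * p.1))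
        - Real.exp (-((1 + X p.2 + Y p.2) * p.1))) / p.1))
      ((volume.restrict (Ioi 0)).prod μ) := by
    fun_prop
  rw [lintegral_lintegral_swap hmeas]
  refine lintegral_congr fun ω => ?_
  have hy : (0:ℝ) < 1 + Y ω := by linarith [hYnn ω]
  have hab : (1:ℝ) + Y ω ≤ 1 + X ω + Y ω := by linarith [hXnn ω]
  rw [frullani hy hab]
  have hdiv : 1 + X ω / (1 + Y ω) = (1 + X ω + Y ω) / (1 + Y ω) := by
    rw [eq_div_iff hy.ne']; field_simp; ring
  rw [hdiv]
end

section
/- Let α > 2, let y > 0, and let g be a nonnegative random variable with E[g^{2/α}] < ∞. Then the series T_I(y) := Γ(1 − 2/α)·Σ_{k=0}^∞ y^{k+1}·E[g^{k+1}·exp(-y·g)] / Γ(2 − 2/α + k) converges and satisfies T_I(y) = y^{2/α}·E[g^{2/α}·γ(1 − 2/α, y·g)], where γ is the lower incomplete gamma function. In particular, T_I(y) ≤ y^{2/α}·Γ(1 − 2/α)·E[g^{2/α}] < ∞. -/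
open MeasureTheory Real Set

/-- The lower incomplete gamma function `γ(a, x) = ∫₀^x t^{a-1} e^{-t} dt`. -/
noncomputable def lowerGamma (a x : ℝ) : ℝ :=
  ∫ t in Set.Ioc (0 : ℝ) x, t ^ (a - 1) * Real.exp (-t)

lemma lowerGamma_integrableOn {a : ℝ} (ha : 0 < a) (x : ℝ) :
    IntegrableOn (fun t : ℝ => t ^ (a - 1) * Real.exp (-t)) (Set.Ioc 0 x) := by
  have h := (Real.GammaIntegral_convergent ha).mono_set
    (Set.Ioc_subset_Ioi_self : Set.Ioc (0:ℝ) x ⊆ Set.Ioi 0)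
  exact h.congr_fun (fun t _ => mul_comm _ _) measurableSet_Ioc

lemma lowerGamma_nonneg (a x : ℝ) : 0 ≤ lowerGamma a x := by
  refine setIntegral_nonneg measurableSet_Ioc fun t ht => ?_
  exact mul_nonneg (Real.rpow_nonneg ht.1.le _) (Real.exp_pos _).le

lemma lowerGamma_mono {a : ℝ} (ha : 0 < a) : Monotone (lowerGamma a) := by
  intro x₁ x₂ h
  refine setIntegral_mono_set (lowerGamma_integrableOn ha x₂) ?_
    (HasSubset.Subset.eventuallyLE (Set.Ioc_subset_Ioc_right h))
  exact (ae_restrict_iff' measurableSet_Ioc).mpr (Filter.Eventually.of_forall fun t ht =>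
    mul_nonneg (Real.rpow_nonneg ht.1.le _) (Real.exp_pos _).le)

lemma lowerGamma_le_Gamma {a : ℝ} (ha : 0 < a) (x : ℝ) :
    lowerGamma a x ≤ Real.Gamma a := by
  have h1 : lowerGamma a x ≤ ∫ t in Set.Ioi (0:ℝ), t ^ (a - 1) * Real.exp (-t) := by
    refine setIntegral_mono_set
      (((Real.GammaIntegral_convergent ha)).congr_fun (fun t _ => mul_comm _ _) measurableSet_Ioi)
      ?_ (HasSubset.Subset.eventuallyLE Set.Ioc_subset_Ioi_self)
    exact (ae_restrict_iff' measurableSet_Ioi).mpr (Filter.Eventually.of_forall fun t ht =>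
      mul_nonneg (Real.rpow_nonneg (le_of_lt ht) _) (Real.exp_pos _).le)
  have h2 : ∫ t in Set.Ioi (0:ℝ), t ^ (a - 1) * Real.exp (-t) = Real.Gamma a := by
    rw [Real.Gamma_eq_integral ha]
    exact setIntegral_congr_fun measurableSet_Ioi fun t _ => mul_comm _ _
  linarith

lemma lowerGamma_succ {a : ℝ} (ha : 0 < a) {x : ℝ} (hx : 0 ≤ x) :
    lowerGamma (a + 1) x = a * lowerGamma a x - x ^ a * Real.exp (-x) := by
  have hint1 : IntervalIntegrable (fun t : ℝ => t ^ (a - 1) * Real.exp (-t)) volume 0 x :=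
    (intervalIntegrable_iff_integrableOn_Ioc_of_le hx).mpr (lowerGamma_integrableOn ha x)
  have hint2 : IntervalIntegrable (fun t : ℝ => t ^ a * Real.exp (-t)) volume 0 x := by
    have := (intervalIntegrable_iff_integrableOn_Ioc_of_le hx).mpr
      (lowerGamma_integrableOn (a := a + 1) (by linarith) x)
    simpa using this
  have hcont : ContinuousOn (fun t : ℝ => -(t ^ a * Real.exp (-t))) (Set.Icc 0 x) := by
    exact (((Real.continuous_rpow_const ha.le).mul (Real.continuous_exp.comp continuous_neg)).neg).continuousOn
  have hderiv : ∀ t ∈ Set.Ioo 0 x, HasDerivAt (fun t : ℝ => -(t ^ a * Real.exp (-t)))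
      (t ^ a * Real.exp (-t) - a * (t ^ (a - 1) * Real.exp (-t))) t := by
    intro t ht
    have h1 : HasDerivAt (fun t : ℝ => t ^ a) (a * t ^ (a - 1)) t :=
      Real.hasDerivAt_rpow_const (Or.inl ht.1.ne')
    have h2 : HasDerivAt (fun t : ℝ => Real.exp (-t)) (Real.exp (-t) * (-1)) t :=
      (hasDerivAt_neg t).exp
    refine (h1.mul h2).neg.congr_deriv ?_
    ring
  have key := intervalIntegral.integral_eq_sub_of_hasDerivAt_of_le hx hcont hderiv
    (hint2.sub (hint1.const_mul a))
  rw [intervalIntegral.integral_sub hint2 (hint1.const_mul a),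
    intervalIntegral.integral_const_mul] at key
  have e1 : ∫ t in (0:ℝ)..x, t ^ a * Real.exp (-t) = lowerGamma (a + 1) x := by
    rw [intervalIntegral.integral_of_le hx, lowerGamma, show a + 1 - 1 = a by ring]
  have e2 : ∫ t in (0:ℝ)..x, t ^ (a - 1) * Real.exp (-t) = lowerGamma a x := by
    rw [intervalIntegral.integral_of_le hx, lowerGamma]
  rw [e1, e2] at key
  simp only [Real.zero_rpow ha.ne', neg_zero, Real.exp_zero, zero_mul, neg_zero, sub_zero] at key
  linarith

lemma Gamma_factorial_le {a : ℝ} (ha : 0 < a) (m : ℕ) :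
    Real.Gamma (a + 1) * m.factorial ≤ Real.Gamma (a + 1 + m) := by
  induction m with
  | zero => simp
  | succ m ih =>
    have hb : (0:ℝ) < a + 1 + m := by positivity
    have hΓ : Real.Gamma (a + 1 + (m + 1) : ℝ) = (a + 1 + m) * Real.Gamma (a + 1 + m) := by
      rw [show (a + 1 + (m + 1) : ℝ) = (a + 1 + m) + 1 by ring, Real.Gamma_add_one hb.ne']
    rw [Nat.factorial_succ]
    push_cast
    push_cast at hΓ ih
    rw [hΓ]
    have h1 : ((m:ℝ) + 1) * (Real.Gamma (a + 1) * m.factorial) ≤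
        (a + 1 + m) * Real.Gamma (a + 1 + m) := by
      apply mul_le_mul (by linarith) ih (by positivity)
      positivity
    calc Real.Gamma (a + 1) * (((m:ℝ) + 1) * m.factorial)
        = ((m:ℝ) + 1) * (Real.Gamma (a + 1) * m.factorial) := by ring
      _ ≤ _ := h1

lemma lowerGamma_partial {a : ℝ} (ha : 0 < a) {x : ℝ} (hx : 0 ≤ x) (n : ℕ) :
    lowerGamma a x = (∑ k ∈ Finset.range n,
        Real.Gamma a * x ^ (a + k) * Real.exp (-x) / Real.Gamma (a + k + 1))
      + Real.Gamma a / Real.Gamma (a + n) * lowerGamma (a + n) x := by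
  induction n with
  | zero =>
    simp [div_self (Real.Gamma_pos_of_pos ha).ne']
  | succ n ih =>
    rw [Finset.sum_range_succ, ih]
    have hb : (0:ℝ) < a + n := by positivity
    have hrec := lowerGamma_succ hb hx
    have hΓ : Real.Gamma (a + n + 1) = (a + n) * Real.Gamma (a + n) :=
      Real.Gamma_add_one hb.ne'
    have hΓn : Real.Gamma (a + n) ≠ 0 := (Real.Gamma_pos_of_pos hb).ne'
    have key : Real.Gamma a / Real.Gamma (a + n) * lowerGamma (a + n) x =
        Real.Gamma a * x ^ (a + n) * Real.exp (-x) / Real.Gamma (a + n + 1)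
          + Real.Gamma a / Real.Gamma (a + (n+1) : ℝ) * lowerGamma (a + (n+1) : ℝ) x := by
      have hcast : (a + ((n:ℝ)+1)) = (a + n) + 1 := by ring
      rw [hcast, hrec, hΓ]
      field_simp
      ring
    push_cast
    push_cast at key
    rw [key]
    ring

lemma lowerGamma_addNat_le {a : ℝ} (ha : 0 < a) {x : ℝ} (hx : 0 ≤ x) (n : ℕ) :
    lowerGamma (a + n) x ≤ x ^ n * lowerGamma a x := by
  have hintb : IntegrableOn (fun t : ℝ => x ^ n * (t ^ (a - 1) * Real.exp (-t)))
      (Set.Ioc 0 x) := (lowerGamma_integrableOn ha x).const_mul _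
  have h1 : lowerGamma (a + n) x ≤ ∫ t in Set.Ioc (0:ℝ) x,
      x ^ n * (t ^ (a - 1) * Real.exp (-t)) := by
    refine setIntegral_mono_on (lowerGamma_integrableOn (by positivity) x) hintb
      measurableSet_Ioc fun t ht => ?_
    have ht0 : (0:ℝ) < t := ht.1
    have : t ^ (a + n - 1) = t ^ (a - 1) * t ^ n := by
      rw [show a + (n:ℝ) - 1 = (a - 1) + n by ring, Real.rpow_add ht0,
        Real.rpow_natCast]
    rw [this]
    have htn : t ^ n ≤ x ^ n := pow_le_pow_left₀ ht0.le ht.2 n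
    calc t ^ (a-1) * t ^ n * Real.exp (-t)
        = t ^ n * (t ^ (a-1) * Real.exp (-t)) := by ring
      _ ≤ x ^ n * (t ^ (a-1) * Real.exp (-t)) := by
          apply mul_le_mul_of_nonneg_right htn
          exact mul_nonneg (Real.rpow_nonneg ht0.le _) (Real.exp_pos _).le
  rwa [integral_const_mul] at h1

lemma lowerGamma_hasSum {a : ℝ} (ha : 0 < a) {x : ℝ} (hx : 0 ≤ x) :
    HasSum (fun k : ℕ => Real.Gamma a * x ^ (a + k) * Real.exp (-x) / Real.Gamma (a + k + 1))
      (lowerGamma a x) := by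
  have hterm_nonneg : ∀ k : ℕ, 0 ≤ Real.Gamma a * x ^ (a + k) * Real.exp (-x) /
      Real.Gamma (a + k + 1) := by
    intro k
    have h1 : (0:ℝ) < a + k + 1 := by positivity
    exact div_nonneg (mul_nonneg (mul_nonneg (Real.Gamma_pos_of_pos ha).le
      (Real.rpow_nonneg hx _)) (Real.exp_pos _).le) (Real.Gamma_pos_of_pos h1).le
  -- remainder
  set R : ℕ → ℝ := fun n => Real.Gamma a / Real.Gamma (a + n) * lowerGamma (a + n) x with hR
  have hRnonneg : ∀ n, 0 ≤ R n := fun n => by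
    have : (0:ℝ) < a + n := by positivity
    exact mul_nonneg (div_nonneg (Real.Gamma_pos_of_pos ha).le
      (Real.Gamma_pos_of_pos this).le) (lowerGamma_nonneg _ _)
  have hRtend : Filter.Tendsto R Filter.atTop (nhds 0) := by
    have hbound : ∀ m : ℕ, R (m + 1) ≤
        (Real.Gamma a * x * lowerGamma a x / Real.Gamma (a + 1)) * (x ^ m / m.factorial) := by
      intro m
      have hb : (0:ℝ) < a + (m+1) := by positivity
      have hΓpos : (0:ℝ) < Real.Gamma (a + (m+1) : ℝ) := Real.Gamma_pos_of_pos hb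
      have hΓ1pos : (0:ℝ) < Real.Gamma (a + 1) := Real.Gamma_pos_of_pos (by linarith)
      have hfac : Real.Gamma (a + 1) * m.factorial ≤ Real.Gamma (a + (m+1) : ℝ) := by
        have := Gamma_factorial_le ha m
        rwa [show a + 1 + (m:ℝ) = a + (m+1) by push_cast; ring] at this
      have hlg : lowerGamma (a + (m+1) : ℝ) x ≤ x ^ (m+1) * lowerGamma a x := by
        have := lowerGamma_addNat_le ha hx (m+1)
        rwa [show ((m+1 : ℕ) : ℝ) = (m:ℝ) + 1 by push_cast; ring] at this
      have h2 : R (m+1) ≤ Real.Gamma a / Real.Gamma (a + (m+1) : ℝ) *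
          (x ^ (m+1) * lowerGamma a x) := by
        rw [hR]
        push_cast
        apply mul_le_mul_of_nonneg_left _ (div_nonneg (Real.Gamma_pos_of_pos ha).le hΓpos.le)
        push_cast at hlg
        exact hlg
      refine h2.trans ?_
      rw [div_mul_eq_mul_div, div_le_iff₀ hΓpos]
      have hgoal : Real.Gamma a * x * lowerGamma a x / Real.Gamma (a + 1) * (x ^ m / m.factorial)
          * (Real.Gamma (a+1) * m.factorial) ≤ Real.Gamma a * x * lowerGamma a x / Real.Gamma (a + 1)
          * (x ^ m / m.factorial) * Real.Gamma (a + (m+1) : ℝ) := by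
        apply mul_le_mul_of_nonneg_left hfac
        apply mul_nonneg
        · exact div_nonneg (mul_nonneg (mul_nonneg (Real.Gamma_pos_of_pos ha).le hx)
            (lowerGamma_nonneg _ _)) hΓ1pos.le
        · exact div_nonneg (pow_nonneg hx _) (Nat.cast_nonneg _)
      refine le_trans (le_of_eq ?_) hgoal
      have hm : (m.factorial : ℝ) ≠ 0 := Nat.cast_ne_zero.mpr m.factorial_ne_zero
      field_simp
      ring
    have hbtend : Filter.Tendsto
        (fun m : ℕ => (Real.Gamma a * x * lowerGamma a x / Real.Gamma (a + 1)) *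
          (x ^ m / m.factorial)) Filter.atTop (nhds 0) := by
      have := (Real.summable_pow_div_factorial x).tendsto_atTop_zero
      simpa using this.const_mul (Real.Gamma a * x * lowerGamma a x / Real.Gamma (a + 1))
    have h1 : Filter.Tendsto (fun m : ℕ => R (m + 1)) Filter.atTop (nhds 0) :=
      squeeze_zero (fun m => hRnonneg _) hbound hbtend
    exact (Filter.tendsto_add_atTop_iff_nat 1).mp h1
  have hpartial : Filter.Tendsto (fun n : ℕ => ∑ k ∈ Finset.range n,
      Real.Gamma a * x ^ (a + k) * Real.exp (-x) / Real.Gamma (a + k + 1))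
      Filter.atTop (nhds (lowerGamma a x)) := by
    have heq : ∀ n : ℕ, ∑ k ∈ Finset.range n,
        Real.Gamma a * x ^ (a + k) * Real.exp (-x) / Real.Gamma (a + k + 1)
        = lowerGamma a x - R n := fun n => by
      have := lowerGamma_partial ha hx n
      rw [hR]
      linarith
    rw [show nhds (lowerGamma a x) = nhds (lowerGamma a x - 0) by rw [sub_zero]]
    exact Filter.Tendsto.congr (fun n => (heq n).symm) (tendsto_const_nhds.sub hRtend)
  have hsummable : Summable (fun k : ℕ =>
      Real.Gamma a * x ^ (a + k) * Real.exp (-x) / Real.Gamma (a + k + 1)) := by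
    refine summable_of_sum_range_le (c := lowerGamma a x) hterm_nonneg fun n => ?_
    have := lowerGamma_partial ha hx n
    have := hRnonneg n
    rw [hR] at this
    linarith [lowerGamma_partial ha hx n]
  have := hsummable.hasSum
  have htsum : ∑' k : ℕ, Real.Gamma a * x ^ (a + k) * Real.exp (-x) / Real.Gamma (a + k + 1)
      = lowerGamma a x :=
    tendsto_nhds_unique hsummable.hasSum.tendsto_sum_nat hpartial
  rwa [htsum] at this

/-- The series form of the interference correction term `T_I(y)` converges to the
lower-incomplete-gamma expectation form, and is bounded by
`y^{2/α} Γ(1 - 2/α) E[g^{2/α}]`. -/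
theorem TI_series_eq_lowerGamma_expectation
    {Ω : Type*} [MeasurableSpace Ω] (μ : Measure Ω) [IsProbabilityMeasure μ]
    (α y : ℝ) (hα : 2 < α) (hy : 0 < y)
    (g : Ω → ℝ) (hg : Measurable g) (hgnn : ∀ ω, 0 ≤ g ω)
    (hgint : Integrable (fun ω => g ω ^ (2 / α)) μ) :
    HasSum (fun k : ℕ =>
        Real.Gamma (1 - 2 / α) * y ^ (k + 1) *
          (∫ ω, g ω ^ (k + 1) * Real.exp (-(y * g ω)) ∂μ) /
          Real.Gamma (2 - 2 / α + (k : ℝ)))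
      (y ^ (2 / α) * ∫ ω, g ω ^ (2 / α) * lowerGamma (1 - 2 / α) (y * g ω) ∂μ)
    ∧ y ^ (2 / α) * (∫ ω, g ω ^ (2 / α) * lowerGamma (1 - 2 / α) (y * g ω) ∂μ)
        ≤ y ^ (2 / α) * Real.Gamma (1 - 2 / α) * ∫ ω, g ω ^ (2 / α) ∂μ := by
  have hα0 : (0:ℝ) < α := by linarith
  have h2α : 0 < 2 / α := by positivity
  have h2α1 : 2 / α < 1 := (div_lt_one hα0).mpr hα
  have ha : 0 < 1 - 2 / α := by linarith
  have hΓa : 0 < Real.Gamma (1 - 2 / α) := Real.Gamma_pos_of_pos ha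
  set F : ℕ → Ω → ℝ := fun k ω =>
    Real.Gamma (1 - 2 / α) * y ^ (k + 1) / Real.Gamma (2 - 2 / α + (k : ℝ)) *
      (g ω ^ (k + 1) * Real.exp (-(y * g ω))) with hF_def
  set S : Ω → ℝ := fun ω => g ω ^ (2 / α) * lowerGamma (1 - 2 / α) (y * g ω) with hS_def
  have hΓk : ∀ k : ℕ, (0:ℝ) < Real.Gamma (2 - 2 / α + (k : ℝ)) := fun k =>
    Real.Gamma_pos_of_pos (by have : (0:ℝ) ≤ (k:ℝ) := Nat.cast_nonneg k; linarith)
  have hFnonneg : ∀ k ω, 0 ≤ F k ω := by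
    intro k ω
    apply mul_nonneg
    · exact div_nonneg (mul_nonneg hΓa.le (pow_nonneg hy.le _)) (hΓk k).le
    · exact mul_nonneg (pow_nonneg (hgnn ω) _) (Real.exp_pos _).le
  -- pointwise HasSum
  have hpt : ∀ ω, HasSum (fun k => F k ω) (y ^ (2 / α) * S ω) := by
    intro ω
    rcases eq_or_lt_of_le (hgnn ω) with h0 | hgpos
    · have hF0 : (fun k => F k ω) = fun _ : ℕ => (0:ℝ) := by
        funext k; simp [hF_def, ← h0]
      have hS0 : S ω = 0 := by
        simp [hS_def, ← h0, Real.zero_rpow h2α.ne']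
      rw [hF0, hS0, mul_zero]; exact hasSum_zero
    · have hxpos : 0 < y * g ω := mul_pos hy hgpos
      have h := (lowerGamma_hasSum ha hxpos.le).mul_left ((y * g ω) ^ ((2:ℝ) / α))
      have hterm : (fun k : ℕ => (y * g ω) ^ ((2:ℝ) / α) *
            (Real.Gamma (1 - 2 / α) * (y * g ω) ^ ((1 - 2 / α) + (k : ℝ)) *
              Real.exp (-(y * g ω)) / Real.Gamma ((1 - 2 / α) + (k : ℝ) + 1)))
          = fun k => F k ω := by
        funext k
        have h1 : (y * g ω) ^ ((2:ℝ) / α) * (y * g ω) ^ ((1 - 2 / α) + (k : ℝ))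
            = (y * g ω) ^ (k + 1) := by
          rw [← Real.rpow_natCast (y * g ω) (k + 1), ← Real.rpow_add hxpos]
          congr 1
          push_cast; ring
        have hΓeq : Real.Gamma ((1 - 2 / α) + (k : ℝ) + 1) = Real.Gamma (2 - 2 / α + (k : ℝ)) := by
          congr 1; ring
        have hxpow : (y * g ω) ^ (k + 1) = y ^ (k + 1) * g ω ^ (k + 1) := mul_pow _ _ _
        rw [hΓeq]
        have hstep : (y * g ω) ^ ((2:ℝ) / α) *
            (Real.Gamma (1 - 2 / α) * (y * g ω) ^ ((1 - 2 / α) + (k : ℝ)) *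
              Real.exp (-(y * g ω)) / Real.Gamma (2 - 2 / α + (k : ℝ)))
            = Real.Gamma (1 - 2 / α) *
              ((y * g ω) ^ ((2:ℝ) / α) * (y * g ω) ^ ((1 - 2 / α) + (k : ℝ))) *
              Real.exp (-(y * g ω)) / Real.Gamma (2 - 2 / α + (k : ℝ)) := by ring
        rw [hstep, h1, hxpow, hF_def]
        ring
      rw [hterm] at h
      have hval : (y * g ω) ^ ((2:ℝ) / α) * lowerGamma (1 - 2 / α) (y * g ω)
          = y ^ ((2:ℝ) / α) * S ω := by
        rw [Real.mul_rpow hy.le (hgnn ω), hS_def]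
        ring
      rwa [hval] at h
  -- integrability of S
  have hSmeas : Measurable S := by
    rw [hS_def]
    exact ((Real.continuous_rpow_const h2α.le).measurable.comp hg).mul
      (((lowerGamma_mono ha).measurable).comp (measurable_const.mul hg))
  have hSnonneg : ∀ ω, 0 ≤ S ω := fun ω =>
    mul_nonneg (Real.rpow_nonneg (hgnn ω) _) (lowerGamma_nonneg _ _)
  have hSle : ∀ ω, S ω ≤ Real.Gamma (1 - 2 / α) * g ω ^ (2 / α) := fun ω => by
    rw [hS_def]
    calc g ω ^ (2 / α) * lowerGamma (1 - 2 / α) (y * g ω)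
        ≤ g ω ^ (2 / α) * Real.Gamma (1 - 2 / α) :=
          mul_le_mul_of_nonneg_left (lowerGamma_le_Gamma ha _) (Real.rpow_nonneg (hgnn ω) _)
      _ = _ := mul_comm _ _
  have hSint : Integrable S μ := by
    refine Integrable.mono' (hgint.const_mul (Real.Gamma (1 - 2 / α)))
      hSmeas.aestronglyMeasurable ?_
    filter_upwards with ω
    rw [Real.norm_eq_abs, abs_of_nonneg (hSnonneg ω)]
    exact hSle ω
  -- integrability of F k
  have hFint : ∀ k, Integrable (F k) μ := by
    intro k
    have hmeas : Measurable fun ω => g ω ^ (k + 1) * Real.exp (-(y * g ω)) :=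
      (hg.pow_const _).mul (Real.measurable_exp.comp ((measurable_const.mul hg).neg))
    have hint0 : Integrable (fun ω => g ω ^ (k + 1) * Real.exp (-(y * g ω))) μ := by
      refine Integrable.mono' (integrable_const (((k+1).factorial : ℝ) / y ^ (k + 1)))
        hmeas.aestronglyMeasurable ?_
      filter_upwards with ω
      rw [Real.norm_eq_abs, abs_of_nonneg
        (mul_nonneg (pow_nonneg (hgnn ω) _) (Real.exp_pos _).le)]
      have hfac : (0:ℝ) < ((k+1).factorial : ℝ) := by
        exact_mod_cast Nat.factorial_pos (k+1)
      have hyk : (0:ℝ) < y ^ (k + 1) := pow_pos hy _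
      have h1 : (y * g ω) ^ (k + 1) / ((k+1).factorial : ℝ) ≤ Real.exp (y * g ω) :=
        Real.pow_div_factorial_le_exp (x := y * g ω) (mul_nonneg hy.le (hgnn ω)) (k + 1)
      have key : (y * g ω) ^ (k + 1) ≤ ((k+1).factorial : ℝ) * Real.exp (y * g ω) := by
        rw [div_le_iff₀ hfac] at h1; linarith
      have heq : g ω ^ (k + 1) * Real.exp (-(y * g ω))
          = (y * g ω) ^ (k + 1) * Real.exp (-(y * g ω)) / y ^ (k + 1) := by
        rw [mul_pow]; field_simp
      rw [heq, div_le_div_iff₀ hyk hyk]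
      calc (y * g ω) ^ (k + 1) * Real.exp (-(y * g ω)) * y ^ (k + 1)
          ≤ (((k+1).factorial : ℝ) * Real.exp (y * g ω)) * Real.exp (-(y * g ω)) * y ^ (k + 1) := by
            apply mul_le_mul_of_nonneg_right _ hyk.le
            exact mul_le_mul_of_nonneg_right key (Real.exp_pos _).le
        _ = ((k+1).factorial : ℝ) * y ^ (k + 1) := by
            rw [mul_assoc ((k+1).factorial : ℝ), ← Real.exp_add]
            simp
    exact hint0.const_mul _
  -- summability of integrals
  have hIS : ∀ n : ℕ, ∑ k ∈ Finset.range n, ∫ ω, F k ω ∂μ ≤ ∫ ω, y ^ ((2:ℝ) / α) * S ω ∂μ := by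
    intro n
    rw [← integral_finset_sum _ (fun k _ => hFint k)]
    refine integral_mono (integrable_finset_sum _ fun k _ => hFint k) (hSint.const_mul _) ?_
    intro ω
    exact sum_le_hasSum (Finset.range n) (fun k _ => hFnonneg k ω) (hpt ω)
  have hsum : Summable (fun k => ∫ ω, ‖F k ω‖ ∂μ) := by
    have hnorm : (fun k => ∫ ω, ‖F k ω‖ ∂μ) = fun k => ∫ ω, F k ω ∂μ := by
      funext k
      congr 1
      funext ω
      rw [Real.norm_eq_abs, abs_of_nonneg (hFnonneg k ω)]
    rw [hnorm]
    exact summable_of_sum_range_le (c := ∫ ω, y ^ ((2:ℝ) / α) * S ω ∂μ)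
      (fun k => integral_nonneg (hFnonneg k)) hIS
  have hmain := hasSum_integral_of_summable_integral_norm hFint hsum
  have htsum : (fun ω => ∑' k, F k ω) = fun ω => y ^ ((2:ℝ) / α) * S ω :=
    funext fun ω => (hpt ω).tsum_eq
  rw [htsum, integral_const_mul] at hmain
  constructor
  · have hsummand : (fun k : ℕ => Real.Gamma (1 - 2 / α) * y ^ (k + 1) *
        (∫ ω, g ω ^ (k + 1) * Real.exp (-(y * g ω)) ∂μ) / Real.Gamma (2 - 2 / α + (k : ℝ)))
        = fun k => ∫ ω, F k ω ∂μ := by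
      funext k
      rw [hF_def]
      rw [integral_const_mul]
      ring
    rw [hsummand]
    exact hmain
  · have hint2 : Integrable (fun ω => Real.Gamma (1 - 2 / α) * g ω ^ (2 / α)) μ :=
      hgint.const_mul _
    have h := integral_mono hSint hint2 hSle
    rw [integral_const_mul] at h
    have hy2 : (0:ℝ) ≤ y ^ ((2:ℝ) / α) := Real.rpow_nonneg hy.le _
    calc y ^ ((2:ℝ) / α) * ∫ ω, S ω ∂μ
        ≤ y ^ ((2:ℝ) / α) * (Real.Gamma (1 - 2 / α) * ∫ ω, g ω ^ (2 / α) ∂μ) :=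
          mul_le_mul_of_nonneg_left h hy2
      _ = _ := by ring
end

section
/- (Proposition 1.) Let α > 2, m > 0, Ω > 0, and let g be a Gamma-distributed random variable with probability density f(x) = (m/Ω)^m·x^{m-1}·exp(-m·x/Ω)/Γ(m) on (0, ∞) (Nakagami-m fading power gain). Then for every y > 0, the series T_I(y) := Γ(1 − 2/α)·Σ_{k=0}^∞ y^{k+1}·E[g^{k+1}·exp(-y·g)] / Γ(2 − 2/α + k) converges and equals m·(m/Ω)^m·(1 − 2/α)^{-1}·y·(y + m/Ω)^{-(m+1)}·₂F₁(m+1, 1; 2 − 2/α; y/(y + m/Ω)), where for |x| < 1, ₂F₁(a, 1; c; x) = Σ_{k=0}^∞ (Γ(a+k)·Γ(c)/(Γ(a)·Γ(c+k)))·x^k denotes the Gauss hypergeometric series (which converges here since 0 < y/(y + m/Ω) < 1). -/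
open MeasureTheory Real Set

open Filter

private lemma TI_aux_ratio (A G D C Rk v u R : ℝ) (hA : A ≠ 0) (hG : G ≠ 0) (hD : D ≠ 0)
    (hC : C ≠ 0) (hRk : Rk ≠ 0) (hu : u ≠ 0) :
    (v * A * G / (D * (u * C)) * (Rk * R)) / (A * G / (D * C) * Rk) = v / u * R := by
  field_simp

private lemma TI_aux_eq (G1 P Gm S B A C i y yk mm : ℝ) (hGm : Gm ≠ 0) (hC : C ≠ 0)
    (hi : i ≠ 0) (hmm : mm ≠ 0) :
    G1 * (yk * y) * (P / Gm * (S * B * A)) / C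
      = mm * P * i⁻¹ * y * S * (A * (i * G1) / (mm * Gm * C) * (yk * B)) := by
  field_simp

private lemma TI_aux_tendsto (a c : ℝ) (hc : 0 < c) :
    Tendsto (fun k : ℕ => (a + (k : ℝ)) / (c + (k : ℝ))) atTop (nhds 1) := by
  have h1 : Tendsto (fun k : ℕ => (a - c) / (c + (k : ℝ))) atTop (nhds 0) := by
    apply Tendsto.div_atTop tendsto_const_nhds
    exact tendsto_atTop_add_const_left _ _ tendsto_natCast_atTop_atTop
  have h2 := h1.const_add 1
  simp only [add_zero] at h2
  refine h2.congr' ?_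
  filter_upwards [eventually_gt_atTop 0] with k hk
  have hck : c + (k : ℝ) ≠ 0 := by positivity
  field_simp
  ring

/-- Proposition 1: for a Gamma(m, Ω) distributed power gain (Nakagami-m fading),
the interference correction series `T_I(y)` converges and admits the closed form
`m (m/Ω)^m (1 - 2/α)⁻¹ y (y + m/Ω)^{-(m+1)} ₂F₁(m+1, 1; 2 - 2/α; y/(y + m/Ω))`,
where the Gauss hypergeometric series (which converges since `0 < y/(y + m/Ω) < 1`)
is written out as a sum. -/
theorem TI_closed_form_nakagami
    (α m Om y : ℝ) (hα : 2 < α) (hm : 0 < m) (hOm : 0 < Om) (hy : 0 < y) :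
    Summable (fun k : ℕ =>
        Real.Gamma (m + 1 + (k : ℝ)) * Real.Gamma (2 - 2 / α) /
          (Real.Gamma (m + 1) * Real.Gamma (2 - 2 / α + (k : ℝ))) *
          (y / (y + m / Om)) ^ k)
    ∧ HasSum (fun k : ℕ =>
        Real.Gamma (1 - 2 / α) * y ^ (k + 1) *
          (∫ x in Set.Ioi (0 : ℝ), x ^ (k + 1) * Real.exp (-(y * x)) *
            ((m / Om) ^ m * x ^ (m - 1) * Real.exp (-(m * x / Om)) / Real.Gamma m)) /
          Real.Gamma (2 - 2 / α + (k : ℝ)))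
      (m * (m / Om) ^ m * (1 - 2 / α)⁻¹ * y * (y + m / Om) ^ (-(m + 1)) *
        ∑' k : ℕ,
          Real.Gamma (m + 1 + (k : ℝ)) * Real.Gamma (2 - 2 / α) /
            (Real.Gamma (m + 1) * Real.Gamma (2 - 2 / α + (k : ℝ))) *
            (y / (y + m / Om)) ^ k) := by
  have hα0 : 0 < α := by linarith
  have h1 : 0 < 1 - 2 / α := by
    have : 2 / α < 1 := (div_lt_one hα0).mpr hα
    linarith
  have hc : 0 < 2 - 2 / α := by linarith
  have hs : 0 < y + m / Om := by positivity
  have hr0 : 0 < y / (y + m / Om) := div_pos hy hs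
  have hr1 : y / (y + m / Om) < 1 := by
    rw [div_lt_one hs]
    have : 0 < m / Om := by positivity
    linarith
  have hfpos : ∀ k : ℕ, 0 <
      Real.Gamma (m + 1 + (k : ℝ)) * Real.Gamma (2 - 2 / α) /
        (Real.Gamma (m + 1) * Real.Gamma (2 - 2 / α + (k : ℝ))) * (y / (y + m / Om)) ^ k := by
    intro k
    have h1' : 0 < Real.Gamma (m + 1 + (k : ℝ)) := Real.Gamma_pos_of_pos (by positivity)
    have h2' : 0 < Real.Gamma (2 - 2 / α) := Real.Gamma_pos_of_pos hc
    have h3' : 0 < Real.Gamma (m + 1) := Real.Gamma_pos_of_pos (by positivity)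
    have h4' : 0 < Real.Gamma (2 - 2 / α + (k : ℝ)) := Real.Gamma_pos_of_pos (by positivity)
    have h5' : 0 < (y / (y + m / Om)) ^ k := pow_pos hr0 k
    positivity
  have hsum : Summable (fun k : ℕ =>
      Real.Gamma (m + 1 + (k : ℝ)) * Real.Gamma (2 - 2 / α) /
        (Real.Gamma (m + 1) * Real.Gamma (2 - 2 / α + (k : ℝ))) *
        (y / (y + m / Om)) ^ k) := by
    apply summable_of_ratio_test_tendsto_lt_one hr1
      (Filter.Eventually.of_forall fun k => (hfpos k).ne')
    have heqr : (fun k : ℕ =>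
        ‖Real.Gamma (m + 1 + ((k + 1 : ℕ) : ℝ)) * Real.Gamma (2 - 2 / α) /
            (Real.Gamma (m + 1) * Real.Gamma (2 - 2 / α + ((k + 1 : ℕ) : ℝ))) *
            (y / (y + m / Om)) ^ (k + 1)‖ /
          ‖Real.Gamma (m + 1 + (k : ℝ)) * Real.Gamma (2 - 2 / α) /
            (Real.Gamma (m + 1) * Real.Gamma (2 - 2 / α + (k : ℝ))) *
            (y / (y + m / Om)) ^ k‖) =
        fun k : ℕ => (m + 1 + (k : ℝ)) / (2 - 2 / α + (k : ℝ)) * (y / (y + m / Om)) := by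
      funext k
      rw [Real.norm_eq_abs, Real.norm_eq_abs, abs_of_pos (hfpos (k + 1)), abs_of_pos (hfpos k)]
      have hG1 : Real.Gamma (m + 1 + ((k + 1 : ℕ) : ℝ)) =
          (m + 1 + (k : ℝ)) * Real.Gamma (m + 1 + (k : ℝ)) := by
        push_cast
        rw [show m + 1 + ((k : ℝ) + 1) = (m + 1 + (k : ℝ)) + 1 by ring]
        exact Real.Gamma_add_one (by positivity)
      have hG2 : Real.Gamma (2 - 2 / α + ((k + 1 : ℕ) : ℝ)) =
          (2 - 2 / α + (k : ℝ)) * Real.Gamma (2 - 2 / α + (k : ℝ)) := by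
        push_cast
        rw [show 2 - 2 / α + ((k : ℝ) + 1) = (2 - 2 / α + (k : ℝ)) + 1 by ring]
        exact Real.Gamma_add_one (by positivity)
      rw [hG1, hG2, pow_succ]
      exact TI_aux_ratio _ _ _ _ _ _ _ _
        (Real.Gamma_pos_of_pos (by positivity)).ne'
        (Real.Gamma_pos_of_pos hc).ne'
        (Real.Gamma_pos_of_pos (by positivity)).ne'
        (Real.Gamma_pos_of_pos (by positivity)).ne'
        (pow_pos hr0 k).ne' (by positivity)
    rw [heqr]
    have := (TI_aux_tendsto (m + 1) (2 - 2 / α) hc).mul_const (y / (y + m / Om))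
    simpa using this
  refine ⟨hsum, ?_⟩
  have heq : ∀ k : ℕ,
      Real.Gamma (1 - 2 / α) * y ^ (k + 1) *
        (∫ x in Set.Ioi (0 : ℝ), x ^ (k + 1) * Real.exp (-(y * x)) *
          ((m / Om) ^ m * x ^ (m - 1) * Real.exp (-(m * x / Om)) / Real.Gamma m)) /
        Real.Gamma (2 - 2 / α + (k : ℝ)) =
      m * (m / Om) ^ m * (1 - 2 / α)⁻¹ * y * (y + m / Om) ^ (-(m + 1)) *
        (Real.Gamma (m + 1 + (k : ℝ)) * Real.Gamma (2 - 2 / α) /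
          (Real.Gamma (m + 1) * Real.Gamma (2 - 2 / α + (k : ℝ))) *
          (y / (y + m / Om)) ^ k) := by
    intro k
    have hintval : (∫ x in Set.Ioi (0 : ℝ), x ^ (k + 1) * Real.exp (-(y * x)) *
        ((m / Om) ^ m * x ^ (m - 1) * Real.exp (-(m * x / Om)) / Real.Gamma m))
        = (m / Om) ^ m / Real.Gamma m *
            ((1 / (y + m / Om)) ^ (m + 1 + (k : ℝ)) * Real.Gamma (m + 1 + (k : ℝ))) := by
      have hint : ∫ x in Set.Ioi (0 : ℝ),
          x ^ (m + 1 + (k : ℝ) - 1) * Real.exp (-((y + m / Om) * x))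
          = (1 / (y + m / Om)) ^ (m + 1 + (k : ℝ)) * Real.Gamma (m + 1 + (k : ℝ)) :=
        integral_rpow_mul_exp_neg_mul_Ioi (by positivity) hs
      rw [← hint, ← integral_const_mul]
      refine setIntegral_congr_fun measurableSet_Ioi (fun x hx => ?_)
      have hx0 : (0 : ℝ) < x := hx
      have e1 : (x : ℝ) ^ (k + 1) = x ^ ((k : ℝ) + 1) := by
        rw [← rpow_natCast x (k + 1)]; push_cast; ring_nf
      have e2 : x ^ ((k : ℝ) + 1) * x ^ (m - 1) = x ^ (m + 1 + (k : ℝ) - 1) := by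
        rw [← rpow_add hx0]; ring_nf
      have e3 : Real.exp (-(y * x)) * Real.exp (-(m * x / Om)) =
          Real.exp (-((y + m / Om) * x)) := by
        rw [← Real.exp_add]; ring_nf
      rw [e1]
      calc x ^ ((k : ℝ) + 1) * Real.exp (-(y * x)) *
            ((m / Om) ^ m * x ^ (m - 1) * Real.exp (-(m * x / Om)) / Real.Gamma m)
          = (m / Om) ^ m / Real.Gamma m * ((x ^ ((k : ℝ) + 1) * x ^ (m - 1)) *
              (Real.exp (-(y * x)) * Real.exp (-(m * x / Om)))) := by ring
        _ = _ := by rw [e2, e3]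
    rw [hintval]
    have p1 : (1 / (y + m / Om)) ^ (m + 1 + (k : ℝ)) =
        (y + m / Om) ^ (-(m + 1)) * (1 / (y + m / Om)) ^ k := by
      rw [show m + 1 + (k : ℝ) = (m + 1) + (k : ℝ) by ring,
        Real.rpow_add (by positivity : (0:ℝ) < 1 / (y + m / Om)),
        Real.rpow_natCast, one_div, Real.inv_rpow hs.le, ← Real.rpow_neg hs.le]
    have p2 : (y / (y + m / Om)) ^ k = y ^ k * (1 / (y + m / Om)) ^ k := by
      rw [div_pow, one_div, inv_pow, div_eq_mul_inv]
    have gm : Real.Gamma (m + 1) = m * Real.Gamma m := Real.Gamma_add_one hm.ne'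
    have gc : Real.Gamma (2 - 2 / α) = (1 - 2 / α) * Real.Gamma (1 - 2 / α) := by
      rw [show (2 : ℝ) - 2 / α = (1 - 2 / α) + 1 by ring]
      exact Real.Gamma_add_one h1.ne'
    rw [p1, p2, gm, gc, pow_succ]
    exact TI_aux_eq _ _ _ _ _ _ _ _ _ _ _
      (Real.Gamma_pos_of_pos hm).ne'
      (Real.Gamma_pos_of_pos (by positivity)).ne'
      h1.ne' hm.ne'
  rw [show (fun k : ℕ =>
      Real.Gamma (1 - 2 / α) * y ^ (k + 1) *
        (∫ x in Set.Ioi (0 : ℝ), x ^ (k + 1) * Real.exp (-(y * x)) *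
          ((m / Om) ^ m * x ^ (m - 1) * Real.exp (-(m * x / Om)) / Real.Gamma m)) /
        Real.Gamma (2 - 2 / α + (k : ℝ))) = fun k : ℕ =>
      m * (m / Om) ^ m * (1 - 2 / α)⁻¹ * y * (y + m / Om) ^ (-(m + 1)) *
        (Real.Gamma (m + 1 + (k : ℝ)) * Real.Gamma (2 - 2 / α) /
          (Real.Gamma (m + 1) * Real.Gamma (2 - 2 / α + (k : ℝ))) *
          (y / (y + m / Om)) ^ k) from funext heq]
  exact hsum.hasSum.mul_left _
end

section
/- (Proposition 4, exact form for a fixed shadowing value.) Let α > 2, K > 0, ω > 0 and y > 0, and let g be a random variable with probability density f(x) = (1+K)·ω·exp(-K)·exp(-(1+K)·ω·x)·I₀(2·√(K·(1+K)·ω·x)) on (0, ∞) (non-central chi-square power of a Rician channel with Rice factor K and mean power 1/ω). Then the series T_I(y) := Γ(1 − 2/α)·Σ_{k=0}^∞ y^{k+1}·E[g^{k+1}·exp(-y·g)] / Γ(2 − 2/α + k) converges and equals (1+K)·exp(-K)·(1 − 2/α)^{-1}·y·ω·(y + (1+K)·ω)^{-2}·Σ_{l=0}^∞ ((l+1)/l!)·(K·(1+K)·ω/(y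 + (1+K)·ω))^l·₂F₁(l+2, 1; 2 − 2/α; y/(y + (1+K)·ω)), where for |x| < 1, ₂F₁(a, 1; c; x) = Σ_{k=0}^∞ (Γ(a+k)·Γ(c)/(Γ(a)·Γ(c+k)))·x^k denotes the Gauss hypergeometric series (which converges here since 0 < y/(y + (1+K)·ω) < 1). -/
open MeasureTheory Real Set

/-- The modified Bessel function of the first kind of order zero,
`I₀(u) = Σ_{j=0}^∞ (u/2)^{2j}/(j!)²`. -/
noncomputable def besselI0 (u : ℝ) : ℝ :=
  ∑' j : ℕ, (u / 2) ^ (2 * j) / ((Nat.factorial j : ℝ)) ^ 2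

lemma TIaux.fact_mul_Gamma_le {s : ℝ} (hs : 1 ≤ s) (k : ℕ) :
    Real.Gamma s * (Nat.factorial k : ℝ) ≤ Real.Gamma (s + k) := by
  induction k with
  | zero => simp
  | succ k ih =>
    have hs0 : (0:ℝ) < s := lt_of_lt_of_le one_pos hs
    have hsk : (0:ℝ) < s + k := by positivity
    have h1 : Real.Gamma (s + ((k:ℕ)+1 : ℕ)) = (s + k) * Real.Gamma (s + k) := by
      push_cast
      rw [show s + ((k:ℝ)+1) = (s + k) + 1 by ring, Real.Gamma_add_one hsk.ne']
    rw [h1]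
    have hfk : (0:ℝ) ≤ Real.Gamma s * (Nat.factorial k : ℝ) := by
      have := Real.Gamma_pos_of_pos hs0
      positivity
    calc Real.Gamma s * (Nat.factorial (k+1) : ℝ)
        = ((k:ℝ)+1) * (Real.Gamma s * (Nat.factorial k : ℝ)) := by
          push_cast [Nat.factorial_succ]; ring
      _ ≤ (s + k) * Real.Gamma (s + k) := by
          apply mul_le_mul (by linarith) ih hfk (by linarith)

lemma TIaux.summable_succ_mul_pow_div_factorial {u : ℝ} (hu : 0 ≤ u) :
    Summable (fun l : ℕ => ((l:ℝ)+1) * u ^ l / (Nat.factorial l : ℝ)) := by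
  refine Summable.of_nonneg_of_le (fun l => by positivity) (fun l => ?_)
    (Real.summable_pow_div_factorial (2*u))
  have h1 : ((l:ℝ)+1) ≤ 2^l := by exact_mod_cast Nat.succ_le_of_lt (Nat.lt_two_pow_self (n := l))
  have h2 : ((l:ℝ)+1) * u ^ l ≤ (2:ℝ)^l * u ^ l :=
    mul_le_mul_of_nonneg_right h1 (by positivity)
  calc ((l:ℝ)+1) * u ^ l / (Nat.factorial l : ℝ) ≤ (2:ℝ)^l * u^l / (Nat.factorial l : ℝ) := by
        exact div_le_div_of_nonneg_right h2 (by positivity) |>.trans_eq rfl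
    _ = (2*u)^l / (Nat.factorial l : ℝ) := by rw [mul_pow]

lemma TIaux.choose_le_two_pow (n k : ℕ) : n.choose k ≤ 2 ^ n := by
  rcases le_or_gt k n with h | h
  · calc n.choose k ≤ ∑ i ∈ Finset.range (n+1), n.choose i :=
        Finset.single_le_sum (fun i _ => Nat.zero_le _) (Finset.mem_range.mpr (by omega))
    _ = 2 ^ n := Nat.sum_range_choose n
  · rw [Nat.choose_eq_zero_of_lt h]; exact Nat.zero_le _

lemma TIaux.Gamma_natCast_add_one (n : ℕ) : Real.Gamma ((n:ℝ) + 1) = (Nat.factorial n : ℝ) :=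
  Real.Gamma_nat_eq_factorial n

lemma TIaux.integrableOn_pow_mul_exp (n : ℕ) {q : ℝ} (hq : 0 < q) :
    IntegrableOn (fun t : ℝ => t ^ n * Real.exp (-(q*t))) (Ioi 0) := by
  have base := integrableOn_rpow_mul_exp_neg_mul_rpow
    (p := 1) (s := (n:ℝ)) (b := q) (lt_of_lt_of_le neg_one_lt_zero (Nat.cast_nonneg n)) one_pos hq
  refine base.congr_fun (fun t ht => ?_) measurableSet_Ioi
  beta_reduce
  rw [Real.rpow_one, Real.rpow_natCast, neg_mul]

lemma TIaux.integral_pow_mul_exp (n : ℕ) {q : ℝ} (hq : 0 < q) :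
    ∫ t in Ioi (0:ℝ), t ^ n * Real.exp (-(q*t)) = (Nat.factorial n : ℝ) / q ^ (n+1) := by
  have h := integral_rpow_mul_exp_neg_mul_Ioi (a := ((n:ℝ)+1)) (r := q) (by positivity) hq
  have hcong : ∫ t in Ioi (0:ℝ), t ^ n * Real.exp (-(q*t))
      = ∫ t in Ioi (0:ℝ), t ^ (((n:ℝ)+1)-1) * Real.exp (-(q*t)) := by
    refine setIntegral_congr_fun measurableSet_Ioi (fun t ht => ?_)
    rw [add_sub_cancel_right, Real.rpow_natCast]
  rw [hcong, h, TIaux.Gamma_natCast_add_one]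
  rw [show ((n:ℝ)+1) = ((n+1 : ℕ) : ℝ) by push_cast; ring, Real.rpow_natCast,
    div_pow, one_pow, one_div, div_eq_mul_inv, mul_comm]


set_option maxHeartbeats 1000000 in
/-- Proposition 4 (exact form for a fixed shadowing value ω): for Rician (non-central
chi-square) power fading with Rice factor `K > 0` and mean power `1/ω`, the interference
correction series `T_I(y)` converges and equals
`(1+K) e^{-K} (1-2/α)⁻¹ y ω (y+(1+K)ω)^{-2} Σ_l ((l+1)/l!) (K(1+K)ω/(y+(1+K)ω))^l
  ₂F₁(l+2, 1; 2-2/α; y/(y+(1+K)ω))`,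
where the Gauss hypergeometric series is written out as a sum. -/
theorem TI_closed_form_rician
    (α K ω y : ℝ) (hα : 2 < α) (hK : 0 < K) (hω : 0 < ω) (hy : 0 < y) :
    (∀ l : ℕ, Summable (fun k : ℕ =>
        Real.Gamma ((l : ℝ) + 2 + (k : ℝ)) * Real.Gamma (2 - 2 / α) /
          (Real.Gamma ((l : ℝ) + 2) * Real.Gamma (2 - 2 / α + (k : ℝ))) *
          (y / (y + (1 + K) * ω)) ^ k))
    ∧ Summable (fun l : ℕ =>
        (((l : ℝ) + 1) / (Nat.factorial l : ℝ)) * (K * (1 + K) * ω / (y + (1 + K) * ω)) ^ l *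
          ∑' k : ℕ,
            Real.Gamma ((l : ℝ) + 2 + (k : ℝ)) * Real.Gamma (2 - 2 / α) /
              (Real.Gamma ((l : ℝ) + 2) * Real.Gamma (2 - 2 / α + (k : ℝ))) *
              (y / (y + (1 + K) * ω)) ^ k)
    ∧ HasSum (fun k : ℕ =>
        Real.Gamma (1 - 2 / α) * y ^ (k + 1) *
          (∫ x in Set.Ioi (0 : ℝ), x ^ (k + 1) * Real.exp (-(y * x)) *
            ((1 + K) * ω * Real.exp (-K) * Real.exp (-((1 + K) * ω * x)) *
              besselI0 (2 * Real.sqrt (K * (1 + K) * ω * x)))) /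
          Real.Gamma (2 - 2 / α + (k : ℝ)))
      ((1 + K) * Real.exp (-K) * (1 - 2 / α)⁻¹ * y * ω * ((y + (1 + K) * ω) ^ 2)⁻¹ *
        ∑' l : ℕ,
          (((l : ℝ) + 1) / (Nat.factorial l : ℝ)) * (K * (1 + K) * ω / (y + (1 + K) * ω)) ^ l *
            ∑' k : ℕ,
              Real.Gamma ((l : ℝ) + 2 + (k : ℝ)) * Real.Gamma (2 - 2 / α) /
                (Real.Gamma ((l : ℝ) + 2) * Real.Gamma (2 - 2 / α + (k : ℝ))) *
                (y / (y + (1 + K) * ω)) ^ k) := by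
  set γ : ℝ := 2 - 2/α with hγdef
  set q : ℝ := y + (1 + K) * ω with hqdef
  set X : ℝ := y / q with hXdef
  set sK : ℝ := K * (1 + K) * ω / q with hsKdef
  have hα0 : (0:ℝ) < α := by linarith
  have h2α : (0:ℝ) < 1 - 2/α := by
    have : 2/α < 1 := (div_lt_one hα0).mpr hα
    linarith
  have hγ1 : (1:ℝ) ≤ γ := by
    rw [hγdef]; linarith
  have hγ0 : (0:ℝ) < γ := by linarith
  have hq : (0:ℝ) < q := by rw [hqdef]; positivity
  have hX0 : 0 < X := by rw [hXdef]; positivity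
  have hX1 : X < 1 := by
    rw [hXdef, div_lt_one hq, hqdef]; nlinarith
  have hsK0 : 0 < sK := by rw [hsKdef]; positivity
  have hG : ∀ k : ℕ, 0 < Real.Gamma (γ + k) :=
    fun k => Real.Gamma_pos_of_pos (by positivity)
  have hΓ' : 0 < Real.Gamma (1 - 2/α) := Real.Gamma_pos_of_pos h2α
  have hΓγ : 0 < Real.Gamma γ := Real.Gamma_pos_of_pos hγ0
  have hγΓ : Real.Gamma γ = (1 - 2/α) * Real.Gamma (1 - 2/α) := by
    rw [hγdef, show (2:ℝ) - 2/α = (1 - 2/α) + 1 by ring, Real.Gamma_add_one h2α.ne']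
  have hGfact : ∀ k : ℕ, Real.Gamma γ * (Nat.factorial k : ℝ) ≤ Real.Gamma (γ + k) :=
    fun k => TIaux.fact_mul_Gamma_le hγ1 k
  have hGam1 : ∀ l k : ℕ, Real.Gamma ((l:ℝ) + 2 + (k:ℝ)) = (Nat.factorial (k+l+1) : ℝ) := by
    intro l k
    rw [show (l:ℝ)+2+(k:ℝ) = ((k+l+1 : ℕ):ℝ) + 1 by push_cast; ring,
      TIaux.Gamma_natCast_add_one]
  have hGam2 : ∀ l : ℕ, Real.Gamma ((l:ℝ) + 2) = (Nat.factorial (l+1) : ℝ) := by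
    intro l
    rw [show (l:ℝ)+2 = ((l+1 : ℕ):ℝ) + 1 by push_cast; ring, TIaux.Gamma_natCast_add_one]
  set A : ℕ → ℕ → ℝ := fun k l =>
    Real.Gamma (1 - 2/α) * ((1+K)*ω) * Real.exp (-K) / q * X^(k+1) * sK^l *
      (Nat.factorial (k+l+1) : ℝ) / ((Nat.factorial l : ℝ)^2 * Real.Gamma (γ + k)) with hAdef
  have hA0 : ∀ k l, 0 < A k l := by
    intro k l
    have h1 := hG k
    simp only [hAdef]
    positivity
  -- factorial identities
  have hfactk : ∀ k l : ℕ, (Nat.factorial (k+l+1) : ℝ)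
      = ((k+(l+1)).choose (l+1) : ℝ) * (Nat.factorial (l+1) : ℝ) * (Nat.factorial k : ℝ) := by
    intro k l
    have h := Nat.choose_mul_factorial_mul_factorial (Nat.le_add_left (l+1) k)
    rw [show k + (l+1) - (l+1) = k by omega] at h
    rw [show k+l+1 = k+(l+1) by omega]
    exact_mod_cast h.symm
  have hfactl : ∀ k l : ℕ, (Nat.factorial (k+l+1) : ℝ)
      = ((l+(k+1)).choose (k+1) : ℝ) * (Nat.factorial (k+1) : ℝ) * (Nat.factorial l : ℝ) := by
    intro k l
    have h := Nat.choose_mul_factorial_mul_factorial (Nat.le_add_left (k+1) l)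
    rw [show l + (k+1) - (k+1) = l by omega] at h
    rw [show k+l+1 = l+(k+1) by omega]
    exact_mod_cast h.symm
  have hXnorm : ‖X‖ < 1 := by rw [Real.norm_eq_abs, abs_of_pos hX0]; exact hX1
  -- the k-majorant
  have hDpos : ∀ l : ℕ, 0 < Real.Gamma (1 - 2/α) * ((1+K)*ω) * Real.exp (-K) / q * X * sK^l *
      (Nat.factorial (l+1) : ℝ) / ((Nat.factorial l : ℝ)^2 * Real.Gamma γ) := by
    intro l; positivity
  have hAeq1 : ∀ k l : ℕ, A k l =
      (Real.Gamma (1 - 2/α) * ((1+K)*ω) * Real.exp (-K) / q * X * sK^l *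
        (Nat.factorial (l+1) : ℝ) / ((Nat.factorial l : ℝ)^2 * Real.Gamma γ) *
        (((k+(l+1)).choose (l+1) : ℝ) * X^k)) *
      (Real.Gamma γ * (Nat.factorial k : ℝ) / Real.Gamma (γ + k)) := by
    intro k l
    have hg := hG k
    have hl : (0:ℝ) < (Nat.factorial l : ℝ) := by positivity
    simp only [hAdef]
    rw [hfactk k l]
    field_simp
    ring
  have hAle1 : ∀ k l : ℕ, A k l ≤
      Real.Gamma (1 - 2/α) * ((1+K)*ω) * Real.exp (-K) / q * X * sK^l *
        (Nat.factorial (l+1) : ℝ) / ((Nat.factorial l : ℝ)^2 * Real.Gamma γ) *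
        (((k+(l+1)).choose (l+1) : ℝ) * X^k) := by
    intro k l
    rw [hAeq1 k l]
    refine mul_le_of_le_one_right ?_ ?_
    · have := hDpos l
      positivity
    · rw [div_le_one (hG k)]
      exact hGfact k
  have h1 : ∀ l, Summable (fun k => A k l) := by
    intro l
    refine Summable.of_nonneg_of_le (fun k => (hA0 k l).le) (fun k => hAle1 k l) ?_
    exact (summable_choose_mul_geometric_of_norm_lt_one (l+1) hXnorm).mul_left _
  have htsumA : ∀ l : ℕ, ∑' k, A k l ≤
      Real.Gamma (1 - 2/α) * ((1+K)*ω) * Real.exp (-K) / q * X * sK^l *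
        (Nat.factorial (l+1) : ℝ) / ((Nat.factorial l : ℝ)^2 * Real.Gamma γ) *
        (1 / (1-X)^(l+1+1)) := by
    intro l
    have hmaj : Summable (fun k : ℕ => Real.Gamma (1 - 2/α) * ((1+K)*ω) * Real.exp (-K) / q * X
        * sK^l * (Nat.factorial (l+1) : ℝ) / ((Nat.factorial l : ℝ)^2 * Real.Gamma γ) *
        (((k+(l+1)).choose (l+1) : ℝ) * X^k)) :=
      (summable_choose_mul_geometric_of_norm_lt_one (l+1) hXnorm).mul_left _
    calc ∑' k, A k l ≤ ∑' k : ℕ, Real.Gamma (1 - 2/α) * ((1+K)*ω) * Real.exp (-K) / q * X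
        * sK^l * (Nat.factorial (l+1) : ℝ) / ((Nat.factorial l : ℝ)^2 * Real.Gamma γ) *
        (((k+(l+1)).choose (l+1) : ℝ) * X^k) := (h1 l).tsum_le_tsum (fun k => hAle1 k l) hmaj
      _ = _ := by
        rw [tsum_mul_left]
        rw [tsum_choose_mul_geometric_of_norm_lt_one (l+1) hXnorm]
  have hX1' : (0:ℝ) < 1 - X := by linarith
  have hsumM : Summable (fun l => ∑' k, A k l) := by
    refine Summable.of_nonneg_of_le
      (fun l => tsum_nonneg (fun k => (hA0 k l).le)) (fun l => ?_)
      ((TIaux.summable_succ_mul_pow_div_factorial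
        (u := sK/(1-X)) (by positivity)).mul_left
        (Real.Gamma (1 - 2/α) * ((1+K)*ω) * Real.exp (-K) / q * X / ((1-X)^2 * Real.Gamma γ)))
    refine (htsumA l).trans_eq ?_
    have hl : (0:ℝ) < (Nat.factorial l : ℝ) := by positivity
    rw [Nat.factorial_succ]
    push_cast
    have hX1ne : (1:ℝ) - X ≠ 0 := hX1'.ne'
    simp only [div_pow, mul_pow, inv_pow]
    field_simp
    ring
  -- summability in l for fixed k
  have h3 : ∀ k, Summable (fun l => A k l) := by
    intro k
    refine Summable.of_nonneg_of_le (fun l => (hA0 k l).le) (fun l => ?_)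
      ((Real.summable_pow_div_factorial (2*sK)).mul_left
        (Real.Gamma (1 - 2/α) * ((1+K)*ω) * Real.exp (-K) / q * X^(k+1) *
          (Nat.factorial (k+1) : ℝ) * 2^(k+1) / Real.Gamma (γ + k)))
    have hg := hG k
    have hl : (0:ℝ) < (Nat.factorial l : ℝ) := by positivity
    have hAeq2 : A k l = (Real.Gamma (1 - 2/α) * ((1+K)*ω) * Real.exp (-K) / q * X^(k+1) *
        (Nat.factorial (k+1) : ℝ) / Real.Gamma (γ + k)) *
        (((l+(k+1)).choose (k+1) : ℝ) * sK^l / (Nat.factorial l : ℝ)) := by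
      simp only [hAdef]
      rw [hfactl k l]
      field_simp
    have hch : ((l+(k+1)).choose (k+1) : ℝ) ≤ 2^(k+1) * 2^l := by
      calc ((l+(k+1)).choose (k+1) : ℝ) ≤ (2:ℝ)^(l+(k+1)) := by
            exact_mod_cast Nat.cast_le.mpr (TIaux.choose_le_two_pow (l+(k+1)) (k+1))
        _ = 2^(k+1) * 2^l := by rw [pow_add]; ring
    calc A k l ≤ (Real.Gamma (1 - 2/α) * ((1+K)*ω) * Real.exp (-K) / q * X^(k+1) *
        (Nat.factorial (k+1) : ℝ) / Real.Gamma (γ + k)) *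
        ((2^(k+1) * 2^l) * sK^l / (Nat.factorial l : ℝ)) := by
          rw [hAeq2]
          have hc0 : (0:ℝ) ≤ Real.Gamma (1 - 2/α) * ((1+K)*ω) * Real.exp (-K) / q * X^(k+1) *
            (Nat.factorial (k+1) : ℝ) / Real.Gamma (γ + k) := by positivity
          refine mul_le_mul_of_nonneg_left ?_ hc0
          have := hsK0
          gcongr
      _ = Real.Gamma (1 - 2/α) * ((1+K)*ω) * Real.exp (-K) / q * X^(k+1) *
          (Nat.factorial (k+1) : ℝ) * 2^(k+1) / Real.Gamma (γ + k) *
          ((2*sK)^l / (Nat.factorial l : ℝ)) := by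
          rw [mul_pow]
          field_simp
  -- double summability and Fubini
  have h4 : Summable (fun p : ℕ×ℕ => A p.2 p.1) :=
    (summable_prod_of_nonneg (fun p => (hA0 p.2 p.1).le)).mpr ⟨fun l => h1 l, hsumM⟩
  have h5 : Summable (fun p : ℕ×ℕ => A p.1 p.2) := h4.prod_symm
  have hswap : ∑' p : ℕ×ℕ, A p.1 p.2 = ∑' l, ∑' k, A k l := by
    calc ∑' p : ℕ×ℕ, A p.1 p.2 = ∑' p : ℕ×ℕ, A p.2 p.1 :=
        ((Equiv.prodComm ℕ ℕ).tsum_eq (fun p : ℕ×ℕ => A p.2 p.1))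
      _ = ∑' l, ∑' k, A k l := h4.tsum_prod' (fun l => h1 l)
  have hHasSum : HasSum (fun k => ∑' l, A k l) (∑' l, ∑' k, A k l) := by
    rw [← hswap]
    exact h5.hasSum.prod_fiberwise (fun k => (h3 k).hasSum)
  -- key termwise identity with the hypergeometric form
  have hyne : y ≠ 0 := hy.ne'
  have hCb : (0:ℝ) < (1 + K) * Real.exp (-K) * (1 - 2/α)⁻¹ * y * ω * (q^2)⁻¹ := by positivity
  have hkey : ∀ l k : ℕ,
      (((l : ℝ) + 1) / (Nat.factorial l : ℝ)) * sK ^ l *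
        (Real.Gamma ((l : ℝ) + 2 + (k : ℝ)) * Real.Gamma γ /
          (Real.Gamma ((l : ℝ) + 2) * Real.Gamma (γ + (k : ℝ))) * X ^ k)
      = ((1 + K) * Real.exp (-K) * (1 - 2/α)⁻¹ * y * ω * (q^2)⁻¹)⁻¹ * A k l := by
    intro l k
    have hg := hG k
    have hΓ'2 := hΓ'
    have h2α2 := h2α
    have hl : (0:ℝ) < (Nat.factorial l : ℝ) := by positivity
    rw [eq_inv_mul_iff_mul_eq₀ hCb.ne']
    rw [hGam1 l k, hGam2 l, hγΓ]
    simp only [hAdef]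
    rw [hXdef, show (Nat.factorial (l+1) : ℝ) = ((l:ℝ)+1) * (Nat.factorial l : ℝ) by
      rw [Nat.factorial_succ]; push_cast; ring]
    have he : Real.exp (-K) ≠ 0 := (Real.exp_pos _).ne'
    generalize hG2 : Real.Gamma (γ + (k:ℝ)) = G2 at hg ⊢
    generalize hG1 : Real.Gamma (1 - 2/α) = G1 at hΓ'2 ⊢
    generalize hc : (1:ℝ) - 2/α = c at h2α2 ⊢
    have hqne : q ≠ 0 := hq.ne'
    simp only [div_pow, mul_pow, inv_pow]
    field_simp
    ring
  -- conjunct 1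
  have hc1 : ∀ l : ℕ, Summable (fun k : ℕ =>
      Real.Gamma ((l : ℝ) + 2 + (k : ℝ)) * Real.Gamma γ /
        (Real.Gamma ((l : ℝ) + 2) * Real.Gamma (γ + (k : ℝ))) * X ^ k) := by
    intro l
    have hβ : (0:ℝ) < ((l : ℝ) + 1) / (Nat.factorial l : ℝ) * sK ^ l := by positivity
    refine (((h1 l).mul_left
      (((1 + K) * Real.exp (-K) * (1 - 2/α)⁻¹ * y * ω * (q^2)⁻¹)⁻¹)).mul_left
      ((((l : ℝ) + 1) / (Nat.factorial l : ℝ) * sK ^ l)⁻¹)).congr (fun k => ?_)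
    rw [← hkey l k, inv_mul_cancel_left₀ hβ.ne']
  -- conjunct 2 termwise
  have hconj2term : ∀ l : ℕ,
      (((l : ℝ) + 1) / (Nat.factorial l : ℝ)) * sK ^ l *
        ∑' k : ℕ, Real.Gamma ((l : ℝ) + 2 + (k : ℝ)) * Real.Gamma γ /
          (Real.Gamma ((l : ℝ) + 2) * Real.Gamma (γ + (k : ℝ))) * X ^ k
      = ((1 + K) * Real.exp (-K) * (1 - 2/α)⁻¹ * y * ω * (q^2)⁻¹)⁻¹ * ∑' k, A k l := by
    intro l
    rw [← tsum_mul_left, ← tsum_mul_left]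
    exact tsum_congr (fun k => hkey l k)
  have hc2 : Summable (fun l : ℕ =>
      (((l : ℝ) + 1) / (Nat.factorial l : ℝ)) * sK ^ l *
        ∑' k : ℕ, Real.Gamma ((l : ℝ) + 2 + (k : ℝ)) * Real.Gamma γ /
          (Real.Gamma ((l : ℝ) + 2) * Real.Gamma (γ + (k : ℝ))) * X ^ k) :=
    (hsumM.mul_left _).congr (fun l => (hconj2term l).symm)
  -- value rewrite
  have hV : (1 + K) * Real.exp (-K) * (1 - 2/α)⁻¹ * y * ω * (q^2)⁻¹ *
      ∑' l : ℕ, (((l : ℝ) + 1) / (Nat.factorial l : ℝ)) * sK ^ l *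
        ∑' k : ℕ, Real.Gamma ((l : ℝ) + 2 + (k : ℝ)) * Real.Gamma γ /
          (Real.Gamma ((l : ℝ) + 2) * Real.Gamma (γ + (k : ℝ))) * X ^ k
      = ∑' l, ∑' k, A k l := by
    rw [tsum_congr hconj2term, tsum_mul_left, ← mul_assoc, mul_inv_cancel₀ hCb.ne', one_mul]
  -- integral evaluation
  have hGpos : ∀ k : ℕ, (0:ℝ) < Real.Gamma (γ + (k:ℝ)) := hG
  have hRlA : ∀ k l : ℕ,
      ((1 + K) * ω * Real.exp (-K) * (K * (1 + K) * ω) ^ l / (Nat.factorial l : ℝ)^2) *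
        ((Nat.factorial (k+l+1) : ℝ) / q ^ (k+l+1+1))
      = (Real.Gamma (γ + (k:ℝ)) / (Real.Gamma (1 - 2/α) * y^(k+1))) * A k l := by
    intro k l
    have hg := hG k
    have hΓ'2 := hΓ'
    have hl : (0:ℝ) < (Nat.factorial l : ℝ) := by positivity
    simp only [hAdef]
    rw [hXdef, hsKdef]
    generalize hG2 : Real.Gamma (γ + (k:ℝ)) = G2 at hg ⊢
    generalize hG1 : Real.Gamma (1 - 2/α) = G1 at hΓ'2 ⊢
    have hqne : q ≠ 0 := hq.ne'
    simp only [div_pow, mul_pow, inv_pow]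
    field_simp
    ring
  have hint : ∀ k : ℕ,
      (∫ x in Set.Ioi (0:ℝ), x ^ (k + 1) * Real.exp (-(y * x)) *
        ((1 + K) * ω * Real.exp (-K) * Real.exp (-((1 + K) * ω * x)) *
          besselI0 (2 * Real.sqrt (K * (1 + K) * ω * x))))
      = ∑' l : ℕ, ((1 + K) * ω * Real.exp (-K) * (K * (1 + K) * ω) ^ l /
          (Nat.factorial l : ℝ)^2) * ((Nat.factorial (k+l+1) : ℝ) / q ^ (k+l+1+1)) := by
    intro k
    have hgval : ∀ l : ℕ, (∫ t in Ioi (0:ℝ),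
        ((1 + K) * ω * Real.exp (-K) * (K * (1 + K) * ω) ^ l / (Nat.factorial l : ℝ)^2) *
          (t ^ (k+l+1) * Real.exp (-(q * t))))
        = ((1 + K) * ω * Real.exp (-K) * (K * (1 + K) * ω) ^ l / (Nat.factorial l : ℝ)^2) *
          ((Nat.factorial (k+l+1) : ℝ) / q ^ (k+l+1+1)) := by
      intro l
      rw [MeasureTheory.integral_const_mul, TIaux.integral_pow_mul_exp (k+l+1) hq]
    have hInt : ∀ l : ℕ, Integrable (fun t : ℝ =>
        ((1 + K) * ω * Real.exp (-K) * (K * (1 + K) * ω) ^ l / (Nat.factorial l : ℝ)^2) *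
          (t ^ (k+l+1) * Real.exp (-(q * t)))) (volume.restrict (Ioi 0)) :=
      fun l => (TIaux.integrableOn_pow_mul_exp (k+l+1) hq).const_mul _
    have hNorm : Summable (fun l : ℕ => ∫ t in Ioi (0:ℝ),
        ‖((1 + K) * ω * Real.exp (-K) * (K * (1 + K) * ω) ^ l / (Nat.factorial l : ℝ)^2) *
          (t ^ (k+l+1) * Real.exp (-(q * t)))‖) := by
      have heqn : ∀ l : ℕ, (∫ t in Ioi (0:ℝ),
          ‖((1 + K) * ω * Real.exp (-K) * (K * (1 + K) * ω) ^ l / (Nat.factorial l : ℝ)^2) *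
            (t ^ (k+l+1) * Real.exp (-(q * t)))‖)
          = ((1 + K) * ω * Real.exp (-K) * (K * (1 + K) * ω) ^ l / (Nat.factorial l : ℝ)^2) *
            ((Nat.factorial (k+l+1) : ℝ) / q ^ (k+l+1+1)) := by
        intro l
        rw [setIntegral_congr_fun measurableSet_Ioi (fun t ht => ?_), hgval l]
        have ht' : (0:ℝ) < t := ht
        rw [norm_of_nonneg (by positivity)]
      refine Summable.congr ?_ (fun l => (heqn l).symm)
      exact (((h3 k).mul_left _).congr (fun l => (hRlA k l).symm))
    have hcong : Set.EqOn (fun x : ℝ => x ^ (k + 1) * Real.exp (-(y * x)) *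
        ((1 + K) * ω * Real.exp (-K) * Real.exp (-((1 + K) * ω * x)) *
          besselI0 (2 * Real.sqrt (K * (1 + K) * ω * x))))
        (fun x : ℝ => ∑' l : ℕ,
          ((1 + K) * ω * Real.exp (-K) * (K * (1 + K) * ω) ^ l / (Nat.factorial l : ℝ)^2) *
            (x ^ (k+l+1) * Real.exp (-(q * x)))) (Ioi 0) := by
      intro t ht
      have ht' : (0:ℝ) < t := ht
      have hv : (0:ℝ) ≤ K * (1 + K) * ω * t := by positivity
      have hbess : besselI0 (2 * Real.sqrt (K * (1 + K) * ω * t))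
          = ∑' j : ℕ, (K * (1 + K) * ω * t) ^ j / (Nat.factorial j : ℝ)^2 := by
        refine tsum_congr (fun j => ?_)
        rw [mul_div_cancel_left₀ _ (two_ne_zero (α := ℝ)), pow_mul, Real.sq_sqrt hv]
      show t ^ (k + 1) * Real.exp (-(y * t)) *
          ((1 + K) * ω * Real.exp (-K) * Real.exp (-((1 + K) * ω * t)) *
            besselI0 (2 * Real.sqrt (K * (1 + K) * ω * t))) = _
      rw [hbess]
      have hexp : Real.exp (-(y * t)) * Real.exp (-((1 + K) * ω * t))
          = Real.exp (-(q * t)) := by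
        rw [← Real.exp_add]
        congr 1
        rw [hqdef]; ring
      calc t ^ (k + 1) * Real.exp (-(y * t)) *
            ((1 + K) * ω * Real.exp (-K) * Real.exp (-((1 + K) * ω * t)) *
              ∑' j : ℕ, (K * (1 + K) * ω * t) ^ j / (Nat.factorial j : ℝ)^2)
          = (t ^ (k + 1) * Real.exp (-(y * t)) *
              ((1 + K) * ω * Real.exp (-K) * Real.exp (-((1 + K) * ω * t)))) *
            ∑' j : ℕ, (K * (1 + K) * ω * t) ^ j / (Nat.factorial j : ℝ)^2 := by ring
        _ = ∑' j : ℕ, (t ^ (k + 1) * Real.exp (-(y * t)) *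
              ((1 + K) * ω * Real.exp (-K) * Real.exp (-((1 + K) * ω * t)))) *
            ((K * (1 + K) * ω * t) ^ j / (Nat.factorial j : ℝ)^2) := tsum_mul_left.symm
        _ = _ := by
            refine tsum_congr (fun j => ?_)
            rw [mul_pow, ← hexp]
            ring
    rw [setIntegral_congr_fun measurableSet_Ioi hcong,
      ← MeasureTheory.integral_tsum_of_summable_integral_norm hInt hNorm]
    exact tsum_congr hgval
  -- final assembly
  refine ⟨hc1, hc2, ?_⟩
  have hFfun : (fun k : ℕ => Real.Gamma (1 - 2/α) * y ^ (k + 1) *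
      (∫ x in Set.Ioi (0:ℝ), x ^ (k + 1) * Real.exp (-(y * x)) *
        ((1 + K) * ω * Real.exp (-K) * Real.exp (-((1 + K) * ω * x)) *
          besselI0 (2 * Real.sqrt (K * (1 + K) * ω * x)))) / Real.Gamma (γ + (k:ℝ)))
      = fun k : ℕ => ∑' l, A k l := by
    funext k
    rw [hint k, ← tsum_mul_left, ← tsum_div_const]
    refine tsum_congr (fun l => ?_)
    have hg := hG k
    have hΓ'2 := hΓ'
    have hl : (0:ℝ) < (Nat.factorial l : ℝ) := by positivity
    simp only [hAdef]
    rw [hXdef, hsKdef]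
    generalize hG2 : Real.Gamma (γ + (k:ℝ)) = G2 at hg ⊢
    generalize hG1 : Real.Gamma (1 - 2/α) = G1 at hΓ'2 ⊢
    have hqne : q ≠ 0 := hq.ne'
    simp only [div_pow, mul_pow, inv_pow]
    field_simp
    ring
  rw [hFfun, hV]
  exact hHasSum
end
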